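/- arXiv:1604.02471 — 2 statements merged into one kernel-verified Lean document; each statement's English description precedes it below -/
import Mathlib

section
/- Let n ≥ 1, let q be a positive integer, and let 𝓛 ⊆ ℤⁿ be a q-periodic subset. Then the following identity holds in ℤ[[z]]: (1−z^q)ⁿ · ϑ_𝓛(z) = Σ_{t=0}^{n} z^{tq} Σ_{ℓ=t}^{n} binom(ℓ, t) Φ_𝓛^{(ℓ)}(z). (This is Corollary 2.6 of the paper.) -/
noncomputable section

open Finset PowerSeries

/-- Binomial coefficient `binom b a` with integer arguments,
zero when `a < 0` or `b < a`. -/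
def ibinom (b a : ℤ) : ℤ := if a < 0 ∨ b < a then 0 else (b.toNat.choose a.toNat : ℤ)

/-- One-norm `‖μ‖` of an integer vector. -/
def onenorm {n : ℕ} (μ : Fin n → ℤ) : ℕ := ∑ i, (μ i).natAbs

/-- `Z(μ)`: number of zero coordinates. -/
def zcount {n : ℕ} (μ : Fin n → ℤ) : ℕ := (univ.filter fun i => μ i = 0).card

/-- `N_𝓛(k, ℓ)`. -/
def Ncard {n : ℕ} (L : Set (Fin n → ℤ)) (k ℓ : ℕ) : ℕ :=
  {μ : Fin n → ℤ | μ ∈ L ∧ onenorm μ = k ∧ zcount μ = ℓ}.ncard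

/-- `N_𝓛(k)`. -/
def NcardTot {n : ℕ} (L : Set (Fin n → ℤ)) (k : ℕ) : ℕ :=
  {μ : Fin n → ℤ | μ ∈ L ∧ onenorm μ = k}.ncard

/-- `ϑ_𝓛^{(ℓ)}(z) = Σ_{k≥0} N_𝓛(k,ℓ) z^k`. -/
def thetaL {n : ℕ} (L : Set (Fin n → ℤ)) (ℓ : ℕ) : PowerSeries ℤ :=
  PowerSeries.mk fun k => (Ncard L k ℓ : ℤ)

/-- `ϑ_𝓛(z) = Σ_{k≥0} N_𝓛(k) z^k`. -/
def thetaTot {n : ℕ} (L : Set (Fin n → ℤ)) : PowerSeries ℤ :=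
  PowerSeries.mk fun k => (NcardTot L k : ℤ)

/-- `N_𝓛^red(k,ℓ)`, counting elements of `C(q) ∩ 𝓛`. -/
def NcardRed {n : ℕ} (L : Set (Fin n → ℤ)) (q k ℓ : ℕ) : ℕ :=
  {μ : Fin n → ℤ | (∀ i, |μ i| < (q : ℤ)) ∧ μ ∈ L ∧ onenorm μ = k ∧ zcount μ = ℓ}.ncard

/-- `Φ_𝓛^{(ℓ)}(z) = Σ_{k≥0} N_𝓛^red(k,ℓ) z^k`. -/
def PhiL {n : ℕ} (L : Set (Fin n → ℤ)) (q ℓ : ℕ) : PowerSeries ℤ :=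
  PowerSeries.mk fun k => (NcardRed L q k ℓ : ℤ)

/-- `𝓛` is `q`-periodic: `μ ∈ 𝓛 ↔ μ + qν ∈ 𝓛`. -/
def qPeriodic {n : ℕ} (q : ℕ) (L : Set (Fin n → ℤ)) : Prop :=
  ∀ μ ν : Fin n → ℤ, μ ∈ L ↔ (μ + (q : ℤ) • ν) ∈ L

/-- `M_𝓛(k,p)`. -/
def Mcoef {n : ℕ} (L : Set (Fin n → ℤ)) (k p : ℕ) : ℤ :=
  ∑ ℓ ∈ range (n+1), ∑ r ∈ range ((k-1+p)/2 + 1),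
    (Ncard L (k-1+p-2*r) ℓ : ℤ) *
    ∑ j ∈ Icc 1 p, (-1 : ℤ)^(j-1) *
      ∑ t ∈ range ((p-j)/2 + 1), ibinom ((n : ℤ) - p + j + 2*t) t *
        ∑ β ∈ range (p-j-2*t+1),
          2^(p-j-2*t-β) * ibinom ((n : ℤ) - ℓ) β * ibinom (ℓ : ℤ) ((p-j-2*t-β : ℕ)) *
          ∑ α ∈ range (β+1), ibinom (β : ℤ) α *
            ∑ i ∈ range j, ibinom ((r : ℤ) - i - p + j + α + t + n - 2) ((n : ℤ) - 2)

/-- `Ã_p^{(ℓ)}(z) = z^p A_p^{(ℓ)}(z)`. -/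
def Atilde (n p ℓ : ℕ) : PowerSeries ℤ :=
  ∑ j ∈ Icc 1 p, C ((-1 : ℤ)^(j-1)) *
    ∑ t ∈ range ((p-j)/2 + 1), C (ibinom ((n : ℤ) - p + j + 2*t) t) *
      ∑ β ∈ range (p-j-2*t+1),
        C (2^(p-j-2*t-β) * ibinom ((n : ℤ) - ℓ) β * ibinom (ℓ : ℤ) ((p-j-2*t-β : ℕ))) *
        ∑ α ∈ range (β+1), C (ibinom (β : ℤ) α) *
          ∑ i ∈ range j, (X : PowerSeries ℤ)^(2*p - 2*(j+t+α-i))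

/-- `Υ_m^{(ℓ)}(z)`; zero when `m < 0`. -/
def Upsilon {n : ℕ} (L : Set (Fin n → ℤ)) (m : ℤ) (ℓ : ℕ) : PowerSeries ℤ :=
  if m < 0 then 0 else
    ∑ h ∈ range (m.toNat + 1),
      C (∑ s ∈ range (h/2 + 1), (Ncard L (h - 2*s) ℓ : ℤ) * ((s + n - 2).choose (n-2) : ℤ)) *
        (X : PowerSeries ℤ)^h

/-- `B̃_{𝓛,p}^{(ℓ)}(z) = z^p B_{𝓛,p}^{(ℓ)}(z)`. -/
def Btilde {n : ℕ} (L : Set (Fin n → ℤ)) (p ℓ : ℕ) : PowerSeries ℤ :=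
  ∑ j ∈ Icc 1 p, C ((-1 : ℤ)^(j-1)) *
    ∑ t ∈ range ((p-j)/2 + 1), C (ibinom ((n : ℤ) - p + j + 2*t) t) *
      ∑ β ∈ range (p-j-2*t+1),
        C (2^(p-j-2*t-β) * ibinom ((n : ℤ) - ℓ) β * ibinom (ℓ : ℤ) ((p-j-2*t-β : ℕ))) *
        ∑ α ∈ range (β+1), C (ibinom (β : ℤ) α) *
          ∑ i ∈ range j,
            (X : PowerSeries ℤ)^(2*p - 2*(j+t+α-i)) *
              Upsilon L (2*((j : ℤ) + t + α - i) - p - 1) ℓ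

/-- `C_{p,g}^{(ℓ)}`. -/
def Cpg (n p g ℓ : ℕ) : ℤ :=
  ∑ j ∈ Icc 1 p, (-1 : ℤ)^(j-1) *
    ∑ t ∈ range ((p-j)/2 + 1), ibinom ((n : ℤ) - p + j + 2*t) t *
      ∑ β ∈ range (p-j-2*t+1),
        2^(p-j-2*t-β) * ibinom ((n : ℤ) - ℓ) β * ibinom (ℓ : ℤ) ((p-j-2*t-β : ℕ)) *
        ∑ i ∈ range j, ibinom (β : ℤ) ((p : ℤ) + i - j - t - g)

namespace Stmt4Aux

/-! ### Single–coordinate reduction -/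

/-- Reduction of an integer modulo `q`, keeping the sign. -/
def rho1 (q : ℕ) (a : ℤ) : ℤ := a.sign * ((a.natAbs % q : ℕ) : ℤ)

lemma rho1_natAbs (q : ℕ) (a : ℤ) : (rho1 q a).natAbs = a.natAbs % q := by
  rcases eq_or_ne a 0 with rfl | h
  · simp [rho1]
  · rw [rho1, Int.natAbs_mul, Int.natAbs_sign, if_neg h, one_mul, Int.natAbs_natCast]

lemma rho1_natAbs_lt {q : ℕ} (hq : 0 < q) (a : ℤ) : (rho1 q a).natAbs < q := by
  rw [rho1_natAbs]; exact Nat.mod_lt _ hq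

lemma rho1_coe (q m : ℕ) : rho1 q (m : ℤ) = ((m % q : ℕ) : ℤ) := by
  rcases Nat.eq_zero_or_pos m with rfl | h
  · simp [rho1]
  · rw [rho1, Int.sign_eq_one_iff_pos.mpr (by exact_mod_cast h)]
    simp

lemma rho1_neg (q : ℕ) (a : ℤ) : rho1 q (-a) = - rho1 q a := by
  simp [rho1]

lemma rho1_eq_zero_iff {q : ℕ} {a : ℤ} : rho1 q a = 0 ↔ q ∣ a.natAbs := by
  constructor
  · intro h
    have := congrArg Int.natAbs h
    rw [rho1_natAbs] at this
    simpa [Nat.dvd_iff_mod_eq_zero] using this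
  · intro h
    obtain ⟨c, hc⟩ := h
    rw [rho1, hc, Nat.mul_mod_right]
    simp

lemma dvd_sub_rho1 (q : ℕ) (a : ℤ) : (q : ℤ) ∣ a - rho1 q a := by
  refine ⟨a.sign * (a.natAbs / q : ℕ), ?_⟩
  have h1 : a.sign * (a.natAbs : ℤ) = a := Int.sign_mul_natAbs a
  have h2 : (a.natAbs : ℤ) = q * (a.natAbs / q : ℕ) + (a.natAbs % q : ℕ) := by
    exact_mod_cast (Nat.div_add_mod a.natAbs q).symm
  have h3 : a - rho1 q a = a.sign * ((a.natAbs : ℤ) - ((a.natAbs % q : ℕ) : ℤ)) := by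
    rw [mul_sub, h1]; rfl
  rw [h3, h2]; ring

end Stmt4Aux
namespace Stmt4Aux

/-! ### Basic series -/

/-- `Σ_{q ∣ m} z^m = 1/(1-z^q)`. -/
def Iser (q : ℕ) : PowerSeries ℤ := PowerSeries.mk fun m => if q ∣ m then 1 else 0

/-- `Σ_{c ∈ ℤ} z^{q|c|} = (1+z^q)/(1-z^q)`. -/
def Gser (q : ℕ) : PowerSeries ℤ :=
  PowerSeries.mk fun m => if m = 0 then 1 else if q ∣ m then 2 else 0

lemma one_sub_mul_Iser {q : ℕ} (hq : 0 < q) : (1 - X ^ q : PowerSeries ℤ) * Iser q = 1 := by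
  ext k
  rw [sub_mul, one_mul, map_sub, mul_comm, coeff_mul_X_pow', coeff_one]
  simp only [Iser, coeff_mk]
  by_cases hk : q ≤ k
  · have hk0 : k ≠ 0 := by omega
    have hiff : q ∣ k ↔ q ∣ k - q := by
      constructor
      · exact fun h => Nat.dvd_sub h dvd_rfl
      · intro h
        have : k - q + q = k := by omega
        exact this ▸ Nat.dvd_add h dvd_rfl
    by_cases h : q ∣ k
    · rw [if_pos h, if_pos hk, if_pos (hiff.mp h), if_neg hk0]; ring
    · rw [if_neg h, if_pos hk, if_neg (fun hh => h (hiff.mpr hh)), if_neg hk0]; ring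
  · rcases Nat.eq_zero_or_pos k with rfl | hkpos
    · simp [hk]
    · have h : ¬ q ∣ k := fun h => hk (Nat.le_of_dvd hkpos h)
      rw [if_neg h, if_neg hk, if_neg (by omega : k ≠ 0)]; ring

lemma Gser_eq {q : ℕ} (hq : 0 < q) : Gser q = (1 + X ^ q) * Iser q := by
  ext k
  rw [add_mul, one_mul, map_add, mul_comm (X ^ q : PowerSeries ℤ), coeff_mul_X_pow']
  simp only [Iser, Gser, coeff_mk]
  by_cases hk : q ≤ k
  · have hk0 : k ≠ 0 := by omega
    have hiff : q ∣ k ↔ q ∣ k - q := by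
      constructor
      · exact fun h => Nat.dvd_sub h dvd_rfl
      · intro h
        have : k - q + q = k := by omega
        exact this ▸ Nat.dvd_add h dvd_rfl
    by_cases h : q ∣ k
    · rw [if_neg hk0, if_pos h, if_pos h, if_pos hk, if_pos (hiff.mp h)]; ring
    · rw [if_neg hk0, if_neg h, if_neg h, if_pos hk, if_neg (fun hh => h (hiff.mpr hh))]; ring
  · rcases Nat.eq_zero_or_pos k with rfl | hkpos
    · simp [hk]
    · have h : ¬ q ∣ k := fun h => hk (Nat.le_of_dvd hkpos h)
      rw [if_neg (by omega : k ≠ 0), if_neg h, if_neg h, if_neg hk]; ring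

/-- Generating series of a single coordinate with reduction `a₀`. -/
def cser (q : ℕ) (a₀ : ℤ) : PowerSeries ℤ :=
  (if a₀ = 0 then Gser q else Iser q) * X ^ a₀.natAbs

/-- The (finite) set of integers with reduction `a₀` and absolute value `m`. -/
def A1 (q : ℕ) (a₀ : ℤ) (m : ℕ) : Finset ℤ :=
  ({(m : ℤ), -(m : ℤ)} : Finset ℤ).filter (fun a => rho1 q a = a₀)

lemma mem_A1 {q : ℕ} {a₀ : ℤ} {m : ℕ} {a : ℤ} :
    a ∈ A1 q a₀ m ↔ rho1 q a = a₀ ∧ a.natAbs = m := by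
  simp only [A1, Finset.mem_filter, Finset.mem_insert, Finset.mem_singleton,
    Int.natAbs_eq_iff]
  tauto

lemma natAbs_of_mem_A1 {q : ℕ} {a₀ : ℤ} {m : ℕ} {a : ℤ} (h : a ∈ A1 q a₀ m) :
    a.natAbs = m := (mem_A1.mp h).2

lemma card_A1 {q : ℕ} (hq : 0 < q) {a₀ : ℤ} (ha : a₀.natAbs < q) (m : ℕ) :
    ((A1 q a₀ m).card : ℤ) = (coeff m) (cser q a₀) := by
  rw [cser, coeff_mul_X_pow']
  by_cases h0 : a₀ = 0
  · subst h0
    simp only [Int.natAbs_zero, Nat.zero_le, if_pos, Nat.sub_zero, if_true, Nat.le_zero]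
    rcases Nat.eq_zero_or_pos m with rfl | hm
    · have hA : A1 q 0 0 = {0} := by
        ext a
        simp [mem_A1, rho1_eq_zero_iff, Int.natAbs_eq_zero]
        intro h; subst h; simp
      rw [hA]
      simp [Gser]
    · have hm0 : m ≠ 0 := by omega
      have hcm : rho1 q ((m : ℤ)) = 0 ↔ q ∣ m := by rw [rho1_eq_zero_iff]; simp
      have hcnm : rho1 q (-(m : ℤ)) = 0 ↔ q ∣ m := by rw [rho1_eq_zero_iff]; simp
      by_cases hd : q ∣ m
      · have hA : A1 q 0 m = {(m : ℤ), -(m : ℤ)} := by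
          apply Finset.filter_true_of_mem
          intro a hamem
          rcases Finset.mem_insert.mp hamem with rfl | ha2
          · exact hcm.mpr hd
          · rw [Finset.mem_singleton.mp ha2]; exact hcnm.mpr hd
        rw [hA, Finset.card_insert_of_notMem (by simp; omega), Finset.card_singleton]
        simp [Gser, hm0, hd]
      · have hA : A1 q 0 m = ∅ := by
          apply Finset.filter_false_of_mem
          intro a hamem
          rcases Finset.mem_insert.mp hamem with rfl | ha2
          · rw [hcm]; exact hd
          · rw [Finset.mem_singleton.mp ha2, hcnm]; exact hd
        simp [hA, Gser, hm0, hd]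
  · rw [if_neg h0]
    have hn0 : 0 < a₀.natAbs := Int.natAbs_pos.mpr h0
    have harith : (a₀.natAbs ≤ m ∧ q ∣ m - a₀.natAbs) ↔ m % q = a₀.natAbs := by
      constructor
      · rintro ⟨hle, t, ht⟩
        have hm : m = q * t + a₀.natAbs := (Nat.sub_eq_iff_eq_add hle).mp ht
        rw [hm, Nat.mul_add_mod, Nat.mod_eq_of_lt ha]
      · intro hmod
        have h1 : a₀.natAbs ≤ m := hmod ▸ Nat.mod_le m q
        refine ⟨h1, m / q, Nat.sub_eq_of_eq_add ?_⟩
        rw [← hmod, Nat.add_comm]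
        exact (Nat.mod_add_div m q).symm
    rcases Nat.eq_zero_or_pos m with rfl | hm
    · have hA : A1 q a₀ 0 = ∅ := by
        rw [Finset.eq_empty_iff_forall_notMem]
        intro a hmem
        obtain ⟨hr, habs⟩ := mem_A1.mp hmem
        have ha0 : a = 0 := by omega
        subst ha0
        apply h0
        rw [← hr]
        simp [rho1]
      rw [hA, if_neg (by omega : ¬ a₀.natAbs ≤ 0)]
      simp
    · have hc1 : rho1 q ((m : ℤ)) = a₀ ↔ ((m % q : ℕ) : ℤ) = a₀ := by rw [rho1_coe]
      have hc2 : rho1 q (-(m : ℤ)) = a₀ ↔ ((m % q : ℕ) : ℤ) = -a₀ := by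
        rw [rho1_neg, rho1_coe, neg_eq_iff_eq_neg]
      have hcard : (A1 q a₀ m).card = if m % q = a₀.natAbs then 1 else 0 := by
        rw [A1, Finset.filter_insert, Finset.filter_singleton]
        by_cases hc1' : rho1 q ((m : ℤ)) = a₀
        · have h1 : ((m % q : ℕ) : ℤ) = a₀ := hc1.mp hc1'
          have hmod : m % q = a₀.natAbs := by
            have := congrArg Int.natAbs h1
            simpa only [Int.natAbs_natCast] using this
          have hc2' : ¬ rho1 q (-(m : ℤ)) = a₀ := by
            rw [hc2]; intro hh; exact h0 (by omega)
          rw [if_pos hc1', if_neg hc2', if_pos hmod]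
          simp
        · by_cases hc2' : rho1 q (-(m : ℤ)) = a₀
          · have hmod : m % q = a₀.natAbs := by
              have := congrArg Int.natAbs (hc2.mp hc2')
              simpa only [Int.natAbs_natCast, Int.natAbs_neg] using this
            rw [if_neg hc1', if_pos hc2', if_pos hmod]
            simp
          · have hmod : ¬ m % q = a₀.natAbs := by
              intro hh
              rcases Int.natAbs_eq a₀ with he | he
              · exact hc1' (hc1.mpr (by rw [hh, ← he]))
              · exact hc2' (hc2.mpr (by rw [hh]; omega))
            rw [if_neg hc1', if_neg hc2', if_neg hmod]
            simp
      rw [hcard]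
      by_cases hmod : m % q = a₀.natAbs
      · rw [if_pos hmod, if_pos (harith.mpr hmod).1]
        simp [Iser, (harith.mpr hmod).2]
      · rw [if_neg hmod]
        by_cases hle : a₀.natAbs ≤ m
        · rw [if_pos hle]
          have hnd : ¬ q ∣ (m - a₀.natAbs) := fun hd => hmod (harith.mp ⟨hle, hd⟩)
          simp [Iser, hnd]
        · rw [if_neg hle]; norm_num

end Stmt4Aux
namespace Stmt4Aux

/-! ### Fibers over a reduced vector -/

/-- The set of `μ` with reduction `μ₀` and one-norm `k`, as an explicit finset. -/
def fiberF {n : ℕ} (q : ℕ) (μ₀ : Fin n → ℤ) (k : ℕ) : Finset (Fin n → ℤ) :=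
  ((univ : Finset (Fin n)).finsuppAntidiag k).biUnion fun l =>
    Fintype.piFinset fun i => A1 q (μ₀ i) (l i)

lemma mem_fiberF {n : ℕ} {q : ℕ} {μ₀ : Fin n → ℤ} {k : ℕ} {μ : Fin n → ℤ} :
    μ ∈ fiberF q μ₀ k ↔ (∀ i, rho1 q (μ i) = μ₀ i) ∧ onenorm μ = k := by
  constructor
  · intro h
    obtain ⟨l, hl, hμ⟩ := Finset.mem_biUnion.mp h
    rw [Finset.mem_finsuppAntidiag] at hl
    rw [Fintype.mem_piFinset] at hμ
    constructor
    · intro i; exact (mem_A1.mp (hμ i)).1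
    · rw [onenorm, ← hl.1]
      exact Finset.sum_congr rfl fun i _ => (mem_A1.mp (hμ i)).2
  · rintro ⟨hr, hk⟩
    refine Finset.mem_biUnion.mpr
      ⟨Finsupp.equivFunOnFinite.symm (fun i => (μ i).natAbs), ?_, ?_⟩
    · rw [Finset.mem_finsuppAntidiag]
      constructor
      · rw [← hk, onenorm]
        exact Finset.sum_congr rfl fun i _ => by
          simp [Finsupp.equivFunOnFinite]; rfl
      · intro i _; exact Finset.mem_univ i
    · rw [Fintype.mem_piFinset]
      intro i
      rw [mem_A1]
      exact ⟨hr i, by simp [Finsupp.equivFunOnFinite]; rfl⟩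

lemma card_fiberF {n : ℕ} (q : ℕ) (μ₀ : Fin n → ℤ) (k : ℕ) :
    (fiberF q μ₀ k).card
      = ∑ l ∈ (univ : Finset (Fin n)).finsuppAntidiag k,
          ∏ i, (A1 q (μ₀ i) (l i)).card := by
  rw [fiberF, Finset.card_biUnion]
  · exact Finset.sum_congr rfl fun l _ => Fintype.card_piFinset _
  · intro l hl l' hl' hne
    rw [Function.onFun, Finset.disjoint_left]
    intro μ hμ hμ'
    apply hne
    rw [Fintype.mem_piFinset] at hμ hμ'
    apply Finsupp.ext
    intro i
    rw [← natAbs_of_mem_A1 (hμ i), ← natAbs_of_mem_A1 (hμ' i)]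

lemma coeff_prod_cser {n : ℕ} {q : ℕ} (hq : 0 < q) (μ₀ : Fin n → ℤ)
    (hμ₀ : ∀ i, (μ₀ i).natAbs < q) (k : ℕ) :
    (coeff k) (∏ i, cser q (μ₀ i)) = ((fiberF q μ₀ k).card : ℤ) := by
  rw [PowerSeries.coeff_prod, card_fiberF]
  push_cast
  exact Finset.sum_congr rfl fun l _ =>
    Finset.prod_congr rfl fun i _ => (card_A1 hq (hμ₀ i) (l i)).symm

end Stmt4Aux
namespace Stmt4Aux

open Classical in
/-- The finset `C(q) ∩ 𝓛`. -/
def Tset {n : ℕ} (q : ℕ) (L : Set (Fin n → ℤ)) : Finset (Fin n → ℤ) :=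
  (Fintype.piFinset fun _ : Fin n => Finset.Ioo (-(q : ℤ)) q).filter (fun μ => μ ∈ L)

lemma mem_Tset {n : ℕ} {q : ℕ} {L : Set (Fin n → ℤ)} {μ : Fin n → ℤ} :
    μ ∈ Tset q L ↔ (∀ i, (μ i).natAbs < q) ∧ μ ∈ L := by
  classical
  rw [Tset]
  simp only [Finset.mem_filter, Fintype.mem_piFinset, Finset.mem_Ioo]
  constructor
  · rintro ⟨h1, h2⟩
    exact ⟨fun i => by have := h1 i; omega, h2⟩
  · rintro ⟨h1, h2⟩
    exact ⟨fun i => by have := h1 i; omega, h2⟩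

open Classical in
/-- The set counted by `NcardTot`, as a finset. -/
def bigF {n : ℕ} (L : Set (Fin n → ℤ)) (k : ℕ) : Finset (Fin n → ℤ) :=
  (Fintype.piFinset fun _ : Fin n => Finset.Icc (-(k : ℤ)) k).filter
    (fun μ => μ ∈ L ∧ onenorm μ = k)

lemma mem_bigF {n : ℕ} {L : Set (Fin n → ℤ)} {k : ℕ} {μ : Fin n → ℤ} :
    μ ∈ bigF L k ↔ μ ∈ L ∧ onenorm μ = k := by
  classical
  rw [bigF]
  simp only [Finset.mem_filter, Fintype.mem_piFinset, Finset.mem_Icc]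
  constructor
  · rintro ⟨_, h2⟩; exact h2
  · rintro ⟨h1, h2⟩
    refine ⟨fun i => ?_, h1, h2⟩
    have : (μ i).natAbs ≤ k := by
      rw [← h2, onenorm]
      exact Finset.single_le_sum (f := fun j => (μ j).natAbs) (fun j _ => Nat.zero_le _) (Finset.mem_univ i)
    omega

lemma NcardTot_eq_card_bigF {n : ℕ} (L : Set (Fin n → ℤ)) (k : ℕ) :
    NcardTot L k = (bigF L k).card := by
  rw [NcardTot, ← Set.ncard_coe_finset]
  congr 1
  ext μ
  simp [mem_bigF]

/-- `q`-periodicity lets us replace `μ` by its reduction. -/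
lemma mem_of_rho {n : ℕ} {q : ℕ} {L : Set (Fin n → ℤ)} (hL : qPeriodic q L)
    (μ : Fin n → ℤ) : (fun i => rho1 q (μ i)) ∈ L ↔ μ ∈ L := by
  have key : (fun i => rho1 q (μ i)) + (q : ℤ) • (fun i => (μ i - rho1 q (μ i)) / q) = μ := by
    funext i
    simp only [Pi.add_apply, Pi.smul_apply, smul_eq_mul]
    rw [Int.mul_ediv_cancel' (dvd_sub_rho1 q (μ i))]
    ring
  rw [hL (fun i => rho1 q (μ i)) (fun i => (μ i - rho1 q (μ i)) / q), key]

/-- Main decomposition of the theta series. -/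
lemma thetaTot_eq {n : ℕ} {q : ℕ} (hq : 0 < q) (L : Set (Fin n → ℤ))
    (hL : qPeriodic q L) :
    thetaTot L = ∑ μ₀ ∈ Tset q L, ∏ i, cser q (μ₀ i) := by
  classical
  ext k
  rw [thetaTot, coeff_mk, map_sum, NcardTot_eq_card_bigF]
  have hmaps : ∀ μ ∈ bigF L k, (fun i => rho1 q (μ i)) ∈ Tset q L := by
    intro μ hμ
    rw [mem_Tset]
    exact ⟨fun i => rho1_natAbs_lt hq (μ i), (mem_of_rho hL μ).mpr (mem_bigF.mp hμ).1⟩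
  rw [Finset.card_eq_sum_card_fiberwise hmaps]
  push_cast
  refine Finset.sum_congr rfl fun μ₀ hμ₀ => ?_
  rw [coeff_prod_cser hq μ₀ (fun i => (mem_Tset.mp hμ₀).1 i)]
  congr 2
  ext μ
  rw [Finset.mem_filter, mem_bigF, mem_fiberF]
  constructor
  · rintro ⟨⟨hμL, hk⟩, hrho⟩
    exact ⟨fun i => congrFun hrho i, hk⟩
  · rintro ⟨hrho, hk⟩
    have hfun : (fun i => rho1 q (μ i)) = μ₀ := funext hrho
    refine ⟨⟨?_, hk⟩, hfun⟩
    rw [← mem_of_rho hL μ, hfun]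
    exact (mem_Tset.mp hμ₀).2

end Stmt4Aux
namespace Stmt4Aux

lemma one_sub_mul_cser {q : ℕ} (hq : 0 < q) (a₀ : ℤ) :
    (1 - X ^ q : PowerSeries ℤ) * cser q a₀
      = (if a₀ = 0 then (1 + X ^ q : PowerSeries ℤ) else 1) * X ^ a₀.natAbs := by
  rw [cser, ← mul_assoc]
  congr 1
  by_cases h : a₀ = 0
  · rw [if_pos h, if_pos h, Gser_eq hq, ← mul_assoc, mul_comm (1 - X ^ q : PowerSeries ℤ),
      mul_assoc, one_sub_mul_Iser hq, mul_one]
  · rw [if_neg h, if_neg h, one_sub_mul_Iser hq]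

lemma one_sub_pow_mul_prod_cser {n : ℕ} {q : ℕ} (hq : 0 < q) (μ₀ : Fin n → ℤ) :
    (1 - X ^ q : PowerSeries ℤ) ^ n * ∏ i, cser q (μ₀ i)
      = (X : PowerSeries ℤ) ^ (onenorm μ₀) * (1 + X ^ q : PowerSeries ℤ) ^ (zcount μ₀) := by
  classical
  have h0 : (1 - X ^ q : PowerSeries ℤ) ^ n * ∏ i, cser q (μ₀ i)
      = ∏ i, ((1 - X ^ q : PowerSeries ℤ) * cser q (μ₀ i)) := by
    rw [Finset.prod_mul_distrib, Finset.prod_const, Finset.card_univ, Fintype.card_fin]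
  rw [h0]
  have : ∀ i : Fin n, (1 - X ^ q : PowerSeries ℤ) * cser q (μ₀ i)
      = (if μ₀ i = 0 then (1 + X ^ q : PowerSeries ℤ) else 1) * X ^ (μ₀ i).natAbs :=
    fun i => one_sub_mul_cser hq (μ₀ i)
  rw [Finset.prod_congr rfl (fun i _ => this i), Finset.prod_mul_distrib,
    Finset.prod_pow_eq_pow_sum, ← onenorm, Finset.prod_ite, Finset.prod_const,
    Finset.prod_const_one, mul_one, ← zcount, mul_comm]

lemma PhiL_eq {n : ℕ} (q : ℕ) (L : Set (Fin n → ℤ)) (ℓ : ℕ) :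
    PhiL L q ℓ = ∑ μ₀ ∈ (Tset q L).filter (fun μ₀ => zcount μ₀ = ℓ),
      (X : PowerSeries ℤ) ^ (onenorm μ₀) := by
  classical
  ext k
  rw [PhiL, coeff_mk, map_sum]
  have h1 : ∀ μ₀ : Fin n → ℤ, (coeff k) ((X : PowerSeries ℤ) ^ onenorm μ₀)
      = if onenorm μ₀ = k then 1 else 0 := by
    intro μ₀; rw [coeff_X_pow]; exact if_congr eq_comm rfl rfl
  rw [Finset.sum_congr rfl (fun μ₀ _ => h1 μ₀), Finset.sum_boole]
  rw [NcardRed, ← Set.ncard_coe_finset]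
  congr 2
  ext μ
  simp only [Finset.coe_filter, Set.mem_setOf_eq, Finset.mem_filter, mem_Tset,
    Int.abs_eq_natAbs]
  constructor
  · rintro ⟨habs, hμL, hk, hz⟩
    exact ⟨⟨⟨fun i => by have := habs i; omega, hμL⟩, hz⟩, hk⟩
  · rintro ⟨⟨⟨habs, hμL⟩, hz⟩, hk⟩
    exact ⟨fun i => by have := habs i; omega, hμL, hk, hz⟩

lemma sum_triangle {M : Type*} [AddCommMonoid M] (n : ℕ) (f : ℕ → ℕ → M) :
    ∑ ℓ ∈ range (n+1), ∑ t ∈ range (ℓ+1), f t ℓ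
      = ∑ t ∈ range (n+1), ∑ ℓ ∈ Icc t n, f t ℓ := by
  rw [Finset.sum_sigma', Finset.sum_sigma']
  refine Finset.sum_bij' (fun p _ => ⟨p.2, p.1⟩) (fun p _ => ⟨p.2, p.1⟩) ?_ ?_ ?_ ?_ ?_ <;>
    simp only [Finset.mem_sigma, Finset.mem_range, Finset.mem_Icc] <;>
    intros <;> first | omega | rfl | trivial

lemma add_pow_expand {q : ℕ} (ℓ : ℕ) :
    (1 + X ^ q : PowerSeries ℤ) ^ ℓ
      = ∑ t ∈ range (ℓ+1), C ((ℓ.choose t : ℤ)) * (X : PowerSeries ℤ) ^ (t*q) := by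
  rw [add_comm (1 : PowerSeries ℤ), add_pow]
  refine Finset.sum_congr rfl fun t _ => ?_
  rw [one_pow, mul_one, ← pow_mul, mul_comm q t]
  rw [mul_comm]
  congr 1

end Stmt4Aux
/-- Corollary 2.6:
`(1-z^q)^n · ϑ_𝓛(z) = Σ_{t=0}^{n} z^{tq} Σ_{ℓ=t}^{n} binom(ℓ,t) Φ_𝓛^{(ℓ)}(z)`. -/
theorem stmt4 {n : ℕ} (hn : 1 ≤ n) {q : ℕ} (hq : 0 < q) (L : Set (Fin n → ℤ))
    (hL : qPeriodic q L) :
    (1 - (X : PowerSeries ℤ)^q)^n * thetaTot L =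
      ∑ t ∈ range (n+1), (X : PowerSeries ℤ)^(t*q) *
        ∑ ℓ ∈ Icc t n, C ((ℓ.choose t : ℤ)) * PhiL L q ℓ := by
  classical
  rw [Stmt4Aux.thetaTot_eq hq L hL, Finset.mul_sum,
    Finset.sum_congr rfl (fun μ₀ _ => Stmt4Aux.one_sub_pow_mul_prod_cser hq μ₀)]
  have hmaps : ∀ μ₀ ∈ Stmt4Aux.Tset q L, zcount μ₀ ∈ range (n+1) := by
    intro μ₀ _
    rw [Finset.mem_range]
    have h1 : zcount μ₀ ≤ n := by
      rw [zcount]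
      exact le_trans (Finset.card_filter_le _ _) (by simp)
    omega
  rw [← Finset.sum_fiberwise_of_maps_to hmaps
      (fun μ₀ => (X : PowerSeries ℤ) ^ onenorm μ₀ * (1 + X ^ q) ^ zcount μ₀)]
  have hinner : ∀ ℓ ∈ range (n+1),
      (∑ μ₀ ∈ (Stmt4Aux.Tset q L).filter (fun μ₀ => zcount μ₀ = ℓ),
        (X : PowerSeries ℤ) ^ onenorm μ₀ * (1 + X ^ q) ^ zcount μ₀)
      = PhiL L q ℓ * (1 + X ^ q) ^ ℓ := by
    intro ℓ _
    rw [Stmt4Aux.PhiL_eq q L ℓ, Finset.sum_mul]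
    refine Finset.sum_congr rfl fun μ₀ hμ₀ => ?_
    rw [(Finset.mem_filter.mp hμ₀).2]
  rw [Finset.sum_congr rfl hinner]
  have hexp : ∀ ℓ ∈ range (n+1), PhiL L q ℓ * (1 + X ^ q : PowerSeries ℤ) ^ ℓ
      = ∑ t ∈ range (ℓ+1),
          (X : PowerSeries ℤ) ^ (t*q) * (C ((ℓ.choose t : ℤ)) * PhiL L q ℓ) := by
    intro ℓ _
    rw [Stmt4Aux.add_pow_expand, Finset.mul_sum]
    exact Finset.sum_congr rfl fun t _ => by ring
  rw [Finset.sum_congr rfl hexp, Stmt4Aux.sum_triangle n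
    (fun t ℓ => (X : PowerSeries ℤ) ^ (t*q) * (C ((ℓ.choose t : ℤ)) * PhiL L q ℓ))]
  exact Finset.sum_congr rfl fun t _ => (Finset.mul_sum _ _ _).symm
end
end

section
/- Let n ≥ 2, 1 ≤ p ≤ n, and let g be an integer with 0 ≤ g ≤ (p−1)/2. Then C_{p,g}^{(n)} = (−1)^{p−1+g} binom(n−1, g). (This is part of Claim 3.8 in the proof of Theorem 2.2.) -/
noncomputable section

open Finset PowerSeries

lemma ibinom_cast' (b a : ℕ) : ibinom b a = (b.choose a : ℤ) := by
  unfold ibinom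
  split
  · rename_i h
    rcases h with h | h
    · omega
    · rw [Nat.choose_eq_zero_of_lt (by exact_mod_cast h)]; simp
  · simp

lemma ibinom_zero' (a : ℤ) : ibinom 0 a = if a = 0 then 1 else 0 := by
  unfold ibinom
  split
  · rename_i h; rw [if_neg]; omega
  · rename_i h; push_neg at h
    have : a = 0 := le_antisymm (by omega) (by omega)
    simp [this]

lemma alt_sum' (n g : ℕ) (hn : 1 ≤ n) :
    ∑ k ∈ range (g+1), (-1:ℤ)^k * (n.choose k : ℤ) = (-1:ℤ)^g * ((n-1).choose g : ℤ) := by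
  induction g with
  | zero => simp
  | succ g ih =>
    rw [Finset.sum_range_succ, ih]
    obtain ⟨m, rfl⟩ : ∃ m, n = m + 1 := ⟨n-1, by omega⟩
    simp only [Nat.add_sub_cancel]
    rw [Nat.choose_succ_succ]
    push_cast
    ring

lemma row_sum' (k : ℕ) : ∑ s ∈ range (k+1), (-2:ℤ)^s * (k.choose s : ℤ) = (-1:ℤ)^k := by
  have h := add_pow (-2 : ℤ) 1 k
  simp only [one_pow, mul_one] at h
  norm_num at h
  exact h.symm

lemma isum' (p g j t : ℕ) :
    ∑ i ∈ range j, ibinom 0 ((p:ℤ) + i - j - t - g) =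
      if p ≤ j + t + g ∧ t + g < p then 1 else 0 := by
  simp only [ibinom_zero']
  by_cases h : p ≤ j + t + g ∧ t + g < p
  · rw [if_pos h]
    rw [Finset.sum_eq_single_of_mem (j+t+g-p) (mem_range.mpr (by omega))]
    · rw [if_pos (by omega)]
    · intro i hi hne
      have hi' := mem_range.mp hi
      rw [if_neg]
      intro hc
      apply hne
      omega
  · rw [if_neg h]
    apply Finset.sum_eq_zero
    intro i hi
    have hi' := mem_range.mp hi
    rw [if_neg]
    intro hc
    omega

lemma triangle' (G : ℕ → ℕ → ℤ) (g : ℕ) :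
    ∑ t ∈ range (g+1), ∑ s ∈ range (g+1-t), G s t
      = ∑ k ∈ range (g+1), ∑ s ∈ range (k+1), G s (k-s) := by
  induction g with
  | zero => simp
  | succ g ih =>
    rw [Finset.sum_range_succ (fun k => ∑ s ∈ range (k+1), G s (k-s)) (g+1), ← ih]
    rw [Finset.sum_range_succ (fun t => ∑ s ∈ range (g+1+1-t), G s t) (g+1)]
    have h1 : ∀ t ∈ range (g+1), ∑ s ∈ range (g+1+1-t), G s t
        = ∑ s ∈ range (g+1-t), G s t + G (g+1-t) t := by
      intro t ht
      have e : g+1+1-t = (g+1-t)+1 := by have := mem_range.mp ht; omega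
      rw [e, Finset.sum_range_succ]
    rw [Finset.sum_congr rfl h1, Finset.sum_add_distrib]
    have h2 : ∑ s ∈ range (g+1+1), G s (g+1-s)
        = ∑ i ∈ range (g+1), G (i+1) (g-i) + G 0 (g+1) := by
      rw [Finset.sum_range_succ' (fun s => G s (g+1-s)) (g+1)]
      congr 1
      apply Finset.sum_congr rfl
      intro i hi
      have := mem_range.mp hi
      congr 1
      omega
    have h3 : ∑ t ∈ range (g+1), G (g+1-t) t = ∑ i ∈ range (g+1), G (i+1) (g-i) := by
      rw [← Finset.sum_range_reflect (fun i => G (i+1) (g-i)) (g+1)]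
      apply Finset.sum_congr rfl
      intro t ht
      have := mem_range.mp ht
      have e1 : g + 1 - 1 - t + 1 = g + 1 - t := by omega
      have e2 : g - (g + 1 - 1 - t) = t := by omega
      rw [e1, e2]
    have e3 : g+1+1-(g+1) = 1 := by omega
    rw [e3]
    simp only [Finset.sum_range_one]
    rw [h2, h3]
    ring

/-- auxiliary value -/
def auxval (n p : ℕ) (j t : ℕ) : ℤ :=
  (-1:ℤ)^(j-1) * ((n-(p-j-2*t)).choose t : ℤ) * (2^(p-j-2*t) * ((n.choose (p-j-2*t)) : ℤ))

/-- auxiliary summand -/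
def auxf (n p g : ℕ) (j t : ℕ) : ℤ :=
  if 1 ≤ j ∧ j ≤ p ∧ 2*t ≤ p - j ∧ p ≤ j+t+g ∧ t+g < p then auxval n p j t else 0

/-- auxiliary second form -/
def auxw (n : ℕ) (t s : ℕ) : ℤ :=
  (-1:ℤ)^s * ((n-s).choose t : ℤ) * (2^s * ((n.choose s) : ℤ))

/-- part of Claim 3.8: `C_{p,g}^{(n)} = (-1)^{p-1+g} binom(n-1, g)`. -/
theorem stmt9 {n p g : ℕ} (hn : 2 ≤ n) (hp1 : 1 ≤ p) (hpn : p ≤ n)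
    (hg : 2*g + 1 ≤ p) :
    Cpg n p g n = (-1 : ℤ)^(p-1+g) * ((n-1).choose g : ℤ) := by
  have step1 : Cpg n p g n = ∑ j ∈ Icc 1 p, ∑ t ∈ range ((p-j)/2+1), auxf n p g j t := by
    unfold Cpg
    apply Finset.sum_congr rfl
    intro j hj
    obtain ⟨hj1, hj2⟩ := mem_Icc.mp hj
    rw [Finset.mul_sum]
    apply Finset.sum_congr rfl
    intro t ht
    have ht' : 2*t ≤ p - j := by have := mem_range.mp ht; omega
    have hβ : ∀ b ∈ range (p-j-2*t+1), b ≠ 0 →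
        2^(p-j-2*t-b) * ibinom ((n:ℤ)-(n:ℕ)) b * ibinom ((n:ℕ):ℤ) ((p-j-2*t-b : ℕ)) *
          ∑ i ∈ range j, ibinom (b:ℤ) ((p:ℤ)+i-j-t-g) = 0 := by
      intro b _ hb
      rw [sub_self, ibinom_zero', if_neg (by exact_mod_cast hb)]
      ring
    rw [Finset.sum_eq_single_of_mem 0 (mem_range.mpr (Nat.succ_pos _)) hβ]
    simp only [Nat.sub_zero, Nat.cast_zero, sub_self]
    rw [isum' p g j t, ibinom_cast' n (p - j - 2*t)]
    rw [show ibinom 0 0 = 1 from by simp [ibinom]]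
    have e : (n:ℤ)-p+j+2*t = ((n-(p-j-2*t) : ℕ) : ℤ) := by omega
    rw [e, ibinom_cast']
    by_cases hc : p ≤ j+t+g ∧ t+g < p
    · rw [if_pos hc]
      unfold auxf auxval
      rw [if_pos ⟨hj1, hj2, ht', hc.1, hc.2⟩]
      ring
    · rw [if_neg hc]
      unfold auxf
      rw [if_neg (fun h => hc ⟨h.2.2.2.1, h.2.2.2.2⟩)]
      ring
  have step2 : ∑ j ∈ Icc 1 p, ∑ t ∈ range ((p-j)/2+1), auxf n p g j t
      = ∑ j ∈ range (p+1), ∑ t ∈ range (p+1), auxf n p g j t := by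
    have inner : ∀ j ∈ Icc 1 p, ∑ t ∈ range ((p-j)/2+1), auxf n p g j t
        = ∑ t ∈ range (p+1), auxf n p g j t := by
      intro j hj
      obtain ⟨hj1, hj2⟩ := mem_Icc.mp hj
      apply Finset.sum_subset (Finset.range_subset_range.mpr (by omega))
      intro t _ hnt
      have : ¬ (t < (p-j)/2+1) := fun h => hnt (mem_range.mpr h)
      unfold auxf
      rw [if_neg]
      intro hcond
      omega
    rw [Finset.sum_congr rfl inner]
    apply Finset.sum_subset
    · intro x hx
      exact mem_range.mpr (by have := mem_Icc.mp hx; omega)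
    · intro j _ hnj
      have : ¬ (1 ≤ j ∧ j ≤ p) := fun h => hnj (mem_Icc.mpr h)
      apply Finset.sum_eq_zero
      intro t _
      unfold auxf
      rw [if_neg]
      intro hcond
      exact this ⟨hcond.1, hcond.2.1⟩
  have step3 : ∑ j ∈ range (p+1), ∑ t ∈ range (p+1), auxf n p g j t
      = ∑ m ∈ range (p+1), ∑ t ∈ range (p+1), auxf n p g (p-m) t := by
    rw [← Finset.sum_range_reflect (fun j => ∑ t ∈ range (p+1), auxf n p g j t) (p+1)]
    simp only [Nat.add_sub_cancel]
  have step5 : ∀ t, ∑ m ∈ range (p+1), auxf n p g (p-m) t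
      = ∑ s ∈ range (p+1-2*t), auxf n p g (p-(2*t+s)) t := by
    intro t
    have hzero : ∀ m ∈ range (p+1), m ∉ Ico (2*t) (p+1) → auxf n p g (p-m) t = 0 := by
      intro m hm hnm
      have hm' := mem_range.mp hm
      have : m < 2*t := by
        by_contra hc
        exact hnm (mem_Ico.mpr ⟨by omega, by omega⟩)
      unfold auxf
      rw [if_neg]
      intro hcond
      omega
    have hsub : Ico (2*t) (p+1) ⊆ range (p+1) := by
      rw [Finset.range_eq_Ico]
      exact Finset.Ico_subset_Ico (Nat.zero_le _) le_rfl
    rw [← Finset.sum_subset hsub hzero, Finset.sum_Ico_eq_sum_range]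
  have step6 : ∀ t ∈ range (p+1), ∀ s ∈ range (p+1-2*t),
      auxf n p g (p-(2*t+s)) t
        = if t+s ≤ g then (-1:ℤ)^(p-1) * auxw n t s else 0 := by
    intro t _ s hs
    have hs' : s < p+1-2*t := mem_range.mp hs
    by_cases hts : t + s ≤ g
    · have hcond : 1 ≤ p-(2*t+s) ∧ p-(2*t+s) ≤ p ∧ 2*t ≤ p - (p-(2*t+s)) ∧
          p ≤ (p-(2*t+s))+t+g ∧ t+g < p := by omega
      unfold auxf auxval auxw
      rw [if_pos hcond, if_pos hts]
      have e1 : p - (p-(2*t+s)) - 2*t = s := by omega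
      rw [e1]
      have e2 : (p - (2*t+s) - 1) + (s + 2*t) = p - 1 := by omega
      have h2t : (-1:ℤ)^(s+2*t) = (-1)^s := by
        rw [pow_add, pow_mul]
        norm_num
      have hsq : (-1:ℤ)^s * (-1)^s = 1 := by
        rw [← mul_pow]
        norm_num
      have h := pow_add (-1:ℤ) (p-(2*t+s)-1) (s+2*t)
      rw [e2, h2t] at h
      have hsign : (-1:ℤ)^(p-(2*t+s)-1) = (-1)^(p-1) * (-1)^s := by
        rw [h, mul_assoc, hsq, mul_one]
      rw [hsign]
      ring
    · unfold auxf
      rw [if_neg (by omega), if_neg hts]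
  have step7 : ∑ t ∈ range (p+1), ∑ s ∈ range (p+1-2*t),
        (if t+s ≤ g then (-1:ℤ)^(p-1) * auxw n t s else 0)
      = ∑ t ∈ range (g+1), ∑ s ∈ range (g+1-t), (-1:ℤ)^(p-1) * auxw n t s := by
    rw [← Finset.sum_subset (Finset.range_subset_range.mpr (show g+1 ≤ p+1 by omega))]
    · apply Finset.sum_congr rfl
      intro t ht
      have ht' := mem_range.mp ht
      rw [← Finset.sum_subset (Finset.range_subset_range.mpr (show g+1-t ≤ p+1-2*t by omega))]
      · apply Finset.sum_congr rfl
        intro s hs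
        rw [if_pos (by have := mem_range.mp hs; omega)]
      · intro s hs hns
        have h1 := mem_range.mp hs
        have h2 : ¬ (s < g+1-t) := fun h => hns (mem_range.mpr h)
        rw [if_neg (by omega)]
    · intro t ht hnt
      have h2 : ¬ (t < g+1) := fun h => hnt (mem_range.mpr h)
      apply Finset.sum_eq_zero
      intro s _
      rw [if_neg (by omega)]
  have step8 : ∑ t ∈ range (g+1), ∑ s ∈ range (g+1-t), (-1:ℤ)^(p-1) * auxw n t s
      = ∑ t ∈ range (g+1), ∑ s ∈ range (g+1-t),
          (-1:ℤ)^(p-1) * ((-2:ℤ)^s * ((n.choose (s+t)) : ℤ) * (((s+t).choose s) : ℤ)) := by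
    apply Finset.sum_congr rfl
    intro t ht
    apply Finset.sum_congr rfl
    intro s hs
    have ht' := mem_range.mp ht
    have hs' := mem_range.mp hs
    have hstn : s + t ≤ n := by omega
    have hch := Nat.choose_mul (n := n) (k := s+t) (s := s) (Nat.le_add_right _ _)
    rw [Nat.add_sub_cancel_left] at hch
    unfold auxw
    have hch' : ((n.choose (s+t)) : ℤ) * (((s+t).choose s) : ℤ)
        = ((n.choose s) : ℤ) * (((n-s).choose t) : ℤ) := by exact_mod_cast hch
    have hneg : (-2:ℤ)^s = (-1)^s * 2^s := by
      rw [← neg_one_mul, mul_pow]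
    rw [hneg, mul_assoc ((-1:ℤ)^s * 2^s), hch']
    ring
  have step9 : ∑ t ∈ range (g+1), ∑ s ∈ range (g+1-t),
        (-1:ℤ)^(p-1) * ((-2:ℤ)^s * ((n.choose (s+t)) : ℤ) * (((s+t).choose s) : ℤ))
      = ∑ k ∈ range (g+1), ∑ s ∈ range (k+1),
          (-1:ℤ)^(p-1) * ((-2:ℤ)^s * ((n.choose (s+(k-s))) : ℤ) * (((s+(k-s)).choose s) : ℤ)) :=
    triangle' (fun s t => (-1:ℤ)^(p-1) * ((-2:ℤ)^s * ((n.choose (s+t)) : ℤ) * (((s+t).choose s) : ℤ))) g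
  have step10 : ∑ k ∈ range (g+1), ∑ s ∈ range (k+1),
        (-1:ℤ)^(p-1) * ((-2:ℤ)^s * ((n.choose (s+(k-s))) : ℤ) * (((s+(k-s)).choose s) : ℤ))
      = (-1:ℤ)^(p-1) * ∑ k ∈ range (g+1), (-1:ℤ)^k * ((n.choose k) : ℤ) := by
    rw [Finset.mul_sum]
    apply Finset.sum_congr rfl
    intro k _
    have e : ∀ s ∈ range (k+1),
        (-1:ℤ)^(p-1) * ((-2:ℤ)^s * ((n.choose (s+(k-s))) : ℤ) * (((s+(k-s)).choose s) : ℤ))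
          = ((-1:ℤ)^(p-1) * ((n.choose k) : ℤ)) * ((-2:ℤ)^s * ((k.choose s) : ℤ)) := by
      intro s hs
      have hs' := mem_range.mp hs
      have e1 : s + (k-s) = k := by omega
      rw [e1]
      ring
    rw [Finset.sum_congr rfl e, ← Finset.mul_sum, row_sum' k]
    ring
  rw [step1, step2, step3, Finset.sum_comm,
    Finset.sum_congr rfl (fun t _ => step5 t),
    Finset.sum_congr rfl (fun t ht => Finset.sum_congr rfl (step6 t ht)),
    step7, step8, step9, step10, alt_sum' n g (by omega), pow_add]
  ring
end
end
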